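/- Let N ≥ 3, let α > -2 and p > 1, and let u be a positive classical solution of the Hénon equation -Δu = |x|^α u^p in ℝ^N. Then the radial derivative term vanishes at the origin in the sense that lim_{x → 0} ∇u(x)·x = 0. -/

import Mathlib

open MeasureTheory Filter Metric

/-- The Laplacian of `u : ℝ^N → ℝ` at `x`, as the sum of the second derivatives
in the coordinate directions. -/
noncomputable def laplacian {N : ℕ} (u : EuclideanSpace ℝ (Fin N) → ℝ)
    (x : EuclideanSpace ℝ (Fin N)) : ℝ :=
  ∑ i, iteratedFDeriv ℝ 2 u x ![EuclideanSpace.single i 1, EuclideanSpace.single i 1]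

/-- A positive classical solution of the Hénon equation `-Δu = |x|^α u^p` in `ℝ^N`:
`u` is continuous on `ℝ^N`, strictly positive, `C²` on `ℝ^N \ {0}`, and satisfies
the equation at every `x ≠ 0`. -/
def IsHenonSolution (N : ℕ) (α p : ℝ) (u : EuclideanSpace ℝ (Fin N) → ℝ) : Prop :=
  Continuous u ∧ (∀ x, 0 < u x) ∧
    ContDiffOn ℝ 2 u {(0 : EuclideanSpace ℝ (Fin N))}ᶜ ∧
    ∀ x : EuclideanSpace ℝ (Fin N), x ≠ 0 → -laplacian u x = ‖x‖ ^ α * u x ^ p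

section AbsDeriv
lemma abs_deriv_le_of_abs_le {g : ℝ → ℝ} {D K η : ℝ} (hg : HasDerivAt g D 0) (h0 : g 0 = 0)
    (hη : 0 < η) (hK : ∀ τ ∈ Set.Ioc (0:ℝ) η, |g τ| ≤ K * τ) : |D| ≤ K := by
  have hs := hasDerivAt_iff_tendsto_slope.1 hg
  have hmono : nhdsWithin (0:ℝ) (Set.Ioi 0) ≤ nhdsWithin (0:ℝ) {(0:ℝ)}ᶜ :=
    nhdsWithin_mono 0 (fun t ht => ne_of_gt ht)
  have hs' : Tendsto (fun t => |slope g 0 t|) (nhdsWithin (0:ℝ) (Set.Ioi 0)) (nhds |D|) :=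
    (hs.mono_left hmono).abs
  refine le_of_tendsto hs' ?_
  filter_upwards [Ioc_mem_nhdsGT_of_mem (Set.left_mem_Ico.2 hη)] with t ht
  have ht0 : 0 < t := ht.1
  have hsl : slope g 0 t = g t / t := by simp [slope_def_field, h0]
  rw [hsl, abs_div, abs_of_pos ht0, div_le_iff₀ ht0]
  exact hK t ht
end AbsDeriv




variable {E : Type*} [NormedAddCommGroup E] [NormedSpace ℝ E]

lemma line_hasDerivAt {u : E → ℝ} {Ω : Set E} (hΩ : IsOpen Ω) (hu : ContDiffOn ℝ 2 u Ω)
    {x : E} (v : E) {t : ℝ} (hx : x + t • v ∈ Ω) :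
    HasDerivAt (fun τ => u (x + τ • v)) (fderiv ℝ u (x + t • v) v) t := by
  have hdiff : DifferentiableAt ℝ u (x + t • v) :=
    (hu.differentiableOn (by norm_num)).differentiableAt (hΩ.mem_nhds hx)
  have hline : HasDerivAt (fun τ : ℝ => x + τ • v) v t := by
    simpa using ((hasDerivAt_id t).smul_const v).const_add x
  exact hdiff.hasFDerivAt.comp_hasDerivAt t hline

lemma line_eventually_hasDerivAt {u : E → ℝ} {Ω : Set E} (hΩ : IsOpen Ω)
    (hu : ContDiffOn ℝ 2 u Ω) {x : E} (v : E) (hx : x ∈ Ω) :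
    ∀ᶠ t in nhds (0:ℝ), HasDerivAt (fun τ => u (x + τ • v)) (fderiv ℝ u (x + t • v) v) t := by
  have hcont : Continuous (fun t : ℝ => x + t • v) := by continuity
  have hmem : ∀ᶠ t in nhds (0:ℝ), x + t • v ∈ Ω := by
    have h0 : x + (0:ℝ) • v ∈ Ω := by simpa using hx
    exact hcont.continuousAt.eventually_mem (hΩ.mem_nhds h0)
  filter_upwards [hmem] with t ht
  exact line_hasDerivAt hΩ hu v ht

lemma fderiv_line_hasDerivAt_aux {u : E → ℝ} {Ω : Set E} (hΩ : IsOpen Ω)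
    (hu : ContDiffOn ℝ 2 u Ω) {x : E} (v : E) {t : ℝ} (hx : x + t • v ∈ Ω) :
    HasDerivAt (fun τ : ℝ => fderiv ℝ u (x + τ • v)) (fderiv ℝ (fderiv ℝ u) (x + t • v) v) t := by
  have h1 : ContDiffOn ℝ 1 (fderiv ℝ u) Ω := hu.fderiv_of_isOpen hΩ (by norm_num)
  have hdiff : DifferentiableAt ℝ (fderiv ℝ u) (x + t • v) :=
    (h1.differentiableOn one_ne_zero).differentiableAt (hΩ.mem_nhds hx)
  have hline : HasDerivAt (fun τ : ℝ => x + τ • v) v t := by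
    simpa using ((hasDerivAt_id t).smul_const v).const_add x
  exact hdiff.hasFDerivAt.comp_hasDerivAt t hline

lemma fderiv_line_hasDerivAt {u : E → ℝ} {Ω : Set E} (hΩ : IsOpen Ω) (hu : ContDiffOn ℝ 2 u Ω)
    {x : E} (hx : x ∈ Ω) (v : E) :
    HasDerivAt (fun τ : ℝ => fderiv ℝ u (x + τ • v) v) (fderiv ℝ (fderiv ℝ u) x v v) 0 := by
  have hx0 : x + (0:ℝ) • v ∈ Ω := by simpa using hx
  have hcomp := fderiv_line_hasDerivAt_aux hΩ hu v hx0
  have h3 := hcomp.clm_apply (hasDerivAt_const (0:ℝ) v)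
  simpa using h3

lemma laplacian_eq_sum {N : ℕ} (u : EuclideanSpace ℝ (Fin N) → ℝ) (x : EuclideanSpace ℝ (Fin N)) :
    laplacian u x = ∑ i, fderiv ℝ (fderiv ℝ u) x (EuclideanSpace.single i 1)
      (EuclideanSpace.single i 1) := by
  unfold laplacian
  refine Finset.sum_congr rfl fun i _ => ?_
  rw [iteratedFDeriv_two_apply]
  simp
section ReflSec
variable {N : ℕ}




local notation "E" => EuclideanSpace ℝ (Fin N)

noncomputable def Refl (x₀ : E) (i : Fin N) (y : E) : E :=
  y + (2 * (x₀ i - y i)) • EuclideanSpace.single i (1:ℝ)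

lemma refl_apply (x₀ : E) (i : Fin N) (y : E) (j : Fin N) :
    Refl x₀ i y j = if j = i then 2 * x₀ i - y i else y j := by
  simp only [Refl, PiLp.add_apply, PiLp.smul_apply, EuclideanSpace.single_apply, smul_eq_mul]
  by_cases h : j = i
  · subst h; simp; ring
  · simp [h]

lemma refl_self (x₀ : E) (i : Fin N) : Refl x₀ i x₀ = x₀ := by
  simp [Refl]

lemma refl_of_coord_eq (x₀ : E) (i : Fin N) (y : E) (h : y i = x₀ i) : Refl x₀ i y = y := by
  simp [Refl, h]

lemma refl_add_line (x₀ : E) (i j : Fin N) (y : E) (τ : ℝ) :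
    Refl x₀ i (y + τ • EuclideanSpace.single j (1:ℝ)) =
      Refl x₀ i y + ((if j = i then -τ else τ)) • EuclideanSpace.single j (1:ℝ) := by
  ext k
  simp only [PiLp.add_apply, PiLp.smul_apply, refl_apply, EuclideanSpace.single_apply,
    smul_eq_mul]
  by_cases hk : k = i
  · subst hk
    by_cases hj : j = k
    · subst hj; simp; ring
    · have hj' : ¬(k = j) := fun h => hj h.symm
      simp [hj, hj']
  · by_cases hj : k = j
    · subst hj
      have hji : ¬(k = i) := hk
      simp [hk, hji]
    · simp [hk, hj]

lemma norm_refl_sub (x₀ : E) (i : Fin N) (y : E) : ‖Refl x₀ i y - x₀‖ = ‖y - x₀‖ := by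
  rw [EuclideanSpace.norm_eq, EuclideanSpace.norm_eq]
  congr 1
  refine Finset.sum_congr rfl fun j _ => ?_
  simp only [PiLp.sub_apply, refl_apply, Real.norm_eq_abs, sq_abs]
  by_cases hj : j = i
  · subst hj; simp; ring
  · simp [hj]

lemma abs_coord_le_norm (y : E) (j : Fin N) : |y j| ≤ ‖y‖ := by
  have h := abs_real_inner_le_norm (EuclideanSpace.single j (1:ℝ)) y
  rw [EuclideanSpace.inner_single_left] at h
  simpa [EuclideanSpace.norm_single] using h

lemma norm_add_line_sq (a : E) (j : Fin N) (τ : ℝ) :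
    ‖a + τ • EuclideanSpace.single j (1:ℝ)‖^2 = ‖a‖^2 + 2*(a j)*τ + τ^2 := by
  rw [norm_add_sq_real]
  rw [real_inner_smul_right, EuclideanSpace.inner_single_right]
  rw [norm_smul, EuclideanSpace.norm_single]
  simp [mul_pow]
  ring
end ReflSec


lemma quad_hasDerivAt (A B C t : ℝ) :
    HasDerivAt (fun τ : ℝ => A + B*τ + C*τ^2) (B + 2*C*t) t := by
  have h : HasDerivAt (fun τ : ℝ => A + B*τ + C*τ^2) (0 + B*1 + C*(2*t^1)) t :=
    ((hasDerivAt_const t A).add ((hasDerivAt_id t).const_mul B)).add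
      ((hasDerivAt_pow 2 t).const_mul C)
  convert h using 1 <;> ring

lemma second_deriv_test {h φ : ℝ → ℝ} {d : ℝ}
    (hh : ∀ᶠ t in nhds (0:ℝ), HasDerivAt h (φ t) t)
    (hφ : HasDerivAt φ d 0) (hm : IsLocalMax h 0) : d ≤ 0 := by
  by_contra hd
  push_neg at hd
  have hφ0 : φ 0 = 0 := by
    have h1 := (hh.self_of_nhds).deriv
    rw [← h1]; exact hm.deriv_eq_zero
  have hs := hasDerivAt_iff_tendsto_slope.1 hφ
  have hpos : ∀ᶠ t in nhdsWithin (0:ℝ) (Set.Ioi 0), 0 < φ t := by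
    have h1 : ∀ᶠ t in nhdsWithin (0:ℝ) {(0:ℝ)}ᶜ, 0 < slope φ 0 t :=
      hs.eventually (eventually_gt_nhds hd)
    have h2 : nhdsWithin (0:ℝ) (Set.Ioi 0) ≤ nhdsWithin (0:ℝ) {(0:ℝ)}ᶜ :=
      nhdsWithin_mono 0 (fun t ht => ne_of_gt ht)
    filter_upwards [h2 h1, self_mem_nhdsWithin] with t h1t h2t
    have ht0 : (0:ℝ) < t := h2t
    have hsl : slope φ 0 t = φ t / t := by simp [slope_def_field, hφ0]
    rw [hsl] at h1t
    have := mul_pos h1t ht0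
    rwa [div_mul_cancel₀ _ (ne_of_gt ht0)] at this
  have hpos' : ∀ᶠ t in nhds (0:ℝ), t ∈ Set.Ioi (0:ℝ) → 0 < φ t :=
    eventually_nhdsWithin_iff.1 hpos
  have hall := (hh.and hpos').and hm
  rw [Metric.eventually_nhds_iff] at hall
  obtain ⟨δ, hδ, hP⟩ := hall
  set η := δ/2 with hη
  have hηpos : 0 < η := by positivity
  have hmem : ∀ t ∈ Set.Icc (0:ℝ) η, dist t (0:ℝ) < δ := by
    intro t ht
    rw [Real.dist_eq, sub_zero, abs_of_nonneg ht.1]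
    linarith [ht.2]
  have hcont : ContinuousOn h (Set.Icc 0 η) := fun t ht =>
    ((hP (hmem t ht)).1.1.differentiableAt.continuousAt).continuousWithinAt
  have hderiv : ∀ t ∈ interior (Set.Icc (0:ℝ) η), 0 < deriv h t := by
    intro t ht
    rw [interior_Icc] at ht
    have h1 := hP (hmem t ⟨le_of_lt ht.1, le_of_lt ht.2⟩)
    rw [h1.1.1.deriv]
    exact h1.1.2 ht.1
  have hmono := strictMonoOn_of_deriv_pos (convex_Icc 0 η) hcont hderiv
  have hlt : h 0 < h η := hmono (Set.left_mem_Icc.2 (le_of_lt hηpos))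
    (Set.right_mem_Icc.2 (le_of_lt hηpos)) hηpos
  exact absurd (hP (hmem η (Set.right_mem_Icc.2 (le_of_lt hηpos)))).2 (not_le.2 hlt)

section Barrier
variable {N : ℕ}
local notation "E" => EuclideanSpace ℝ (Fin N)

set_option maxHeartbeats 2000000 in
lemma barrier (hN : 3 ≤ N) (x₀ : E) (i : Fin N)
    (ρ ε M κ : ℝ) (hρ : 0 < ρ) (hε : 0 ≤ ε) (hM : 0 ≤ M) (hκ : 0 < κ)
    (w : E → ℝ) (hwc : Continuous w)
    (hflat : ∀ y : E, y i = x₀ i → w y = 0)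
    (hbdd : ∀ y ∈ closedBall x₀ (ρ/2), w y ≤ ε)
    (hsub : ∀ y : E, 0 < y i - x₀ i → y i - x₀ i < ρ/4 → y ∈ ball x₀ (ρ/2) →
      ∃ (d : Fin N → ℝ) (φ : Fin N → ℝ → ℝ), -M ≤ ∑ j, d j ∧
        (∀ j, HasDerivAt (φ j) (d j) 0) ∧
        (∀ j, ∀ᶠ t in nhds (0:ℝ), HasDerivAt
          (fun τ => w (y + τ • EuclideanSpace.single j (1:ℝ))) (φ j t) t)) :
    ∀ τ ∈ Set.Icc (0:ℝ) (ρ/4),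
      w (x₀ + τ • EuclideanSpace.single i (1:ℝ)) ≤ (κ + ρ*M/2 + 6*((N:ℝ)-1)*ε/ρ) * τ := by
  have hN1 : (2:ℝ) ≤ (N:ℝ) - 1 := by
    have : (3:ℝ) ≤ (N:ℝ) := by exact_mod_cast hN
    linarith
  obtain ⟨c1, hc1def⟩ : ∃ c : ℝ, c = 6*ε/ρ^2 := ⟨_, rfl⟩
  obtain ⟨K, hKdef⟩ : ∃ k : ℝ, k = κ + ρ*M/2 + 6*((N:ℝ)-1)*ε/ρ := ⟨_, rfl⟩
  rw [← hKdef]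
  have hc10 : 0 ≤ c1 := by rw [hc1def]; positivity
  have hauxKε : 0 ≤ 6*((N:ℝ)-1)*ε/ρ := by
    apply div_nonneg _ hρ.le
    nlinarith
  have hK0 : 0 < K := by
    rw [hKdef]
    have h2 : 0 ≤ ρ*M/2 := by positivity
    linarith
  have hKε : 12*ε/ρ ≤ K := by
    rw [hKdef]
    have h1 : 12*ε/ρ ≤ 6*((N:ℝ)-1)*ε/ρ := by
      rw [div_le_div_iff₀ hρ hρ]
      nlinarith [mul_nonneg (mul_nonneg (by linarith : (0:ℝ) ≤ 6*((N:ℝ)-1) - 12) hε) hρ.le]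
    have h2 : 0 ≤ ρ*M/2 := by positivity
    linarith
  obtain ⟨s, hsdef⟩ : ∃ f : E → ℝ, f = fun y => y i - x₀ i := ⟨_, rfl⟩
  have hscont : Continuous s := by
    rw [hsdef]; exact ((EuclideanSpace.proj i).continuous).sub continuous_const
  obtain ⟨b, hbdef⟩ : ∃ f : E → ℝ,
      f = fun y => c1*(‖y - x₀‖^2 - (s y)^2) + K*(s y - (s y)^2/ρ) := ⟨_, rfl⟩
  have hbeq : ∀ y : E, b y = c1*(‖y - x₀‖^2 - (s y)^2) + K*(s y - (s y)^2/ρ) := fun y => by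
    rw [hbdef]
  have hbcont : Continuous b := by
    rw [hbdef]
    have hn : Continuous (fun y : E => ‖y - x₀‖) := (continuous_id.sub continuous_const).norm
    have h1 : Continuous fun y : E => ‖y - x₀‖^2 - (s y)^2 := (hn.pow 2).sub (hscont.pow 2)
    have h2 : Continuous fun y : E => s y - (s y)^2/ρ := hscont.sub ((hscont.pow 2).div_const ρ)
    exact ((continuous_const.mul h1).add (continuous_const.mul h2))
  have hq : ∀ y : E, (s y)^2 ≤ ‖y - x₀‖^2 := by
    intro y
    have h1 : s y = (y - x₀) i := by rw [hsdef]; simp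
    have h2 := abs_coord_le_norm (y - x₀) i
    calc (s y)^2 = |(y - x₀) i|^2 := by rw [h1, sq_abs]
    _ ≤ ‖y - x₀‖^2 := by exact pow_le_pow_left₀ (abs_nonneg _) h2 2
  set RS : Set _ := s ⁻¹' (Set.Icc 0 (ρ/4)) ∩ closedBall x₀ (ρ/2) with hRSdef
  have hclosed : IsClosed RS := (isClosed_Icc.preimage hscont).inter isClosed_closedBall
  have hcompact : IsCompact RS :=
    (isCompact_closedBall x₀ (ρ/2)).of_isClosed_subset hclosed Set.inter_subset_right
  have hx₀RS : x₀ ∈ RS := by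
    constructor
    · rw [Set.mem_preimage, hsdef]
      simp only [sub_self, Set.mem_Icc, le_refl, true_and]
      positivity
    · exact mem_closedBall_self (by positivity)
  obtain ⟨m, hm, hmax⟩ := hcompact.exists_isMaxOn ⟨x₀, hx₀RS⟩ ((hwc.sub hbcont).continuousOn)
  have hm1 : s m ∈ Set.Icc (0:ℝ) (ρ/4) := hm.1
  have hm2 : ‖m - x₀‖ ≤ ρ/2 := by
    have := hm.2
    rwa [mem_closedBall, dist_eq_norm] at this
  have hbm : b m = c1*(‖m - x₀‖^2 - (s m)^2) + K*(s m - (s m)^2/ρ) := hbeq m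
  -- main claim : w m - b m ≤ 0
  have hzm : w m - b m ≤ 0 := by
    rcases eq_or_lt_of_le hm1.1 with h0 | hpos
    · -- flat part
      have hw0 : w m = 0 := hflat m (by rw [hsdef] at h0; simp at h0; linarith)
      have hb0 : 0 ≤ b m := by
        rw [hbm, ← h0]
        have h3 : 0 ≤ c1 * (‖m - x₀‖^2 - (0:ℝ)^2) := by
          apply mul_nonneg hc10
          nlinarith [sq_nonneg ‖m - x₀‖]
        have h4 : K*((0:ℝ) - (0:ℝ)^2/ρ) = 0 := by
          field_simp
          ring
        linarith
      linarith
    · rcases eq_or_lt_of_le hm1.2 with h4 | h4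
      · -- cap s m = ρ/4
        have hw : w m ≤ ε := hbdd m hm.2
        have hb : ε ≤ b m := by
          rw [hbm]
          have hKterm : K*(s m - (s m)^2/ρ) = K*(3*ρ/16) := by
            rw [h4]; field_simp; ring
          have hcterm : 0 ≤ c1*(‖m - x₀‖^2 - (s m)^2) :=
            mul_nonneg hc10 (by linarith [hq m])
          have h5 : 9*ε/4 ≤ K*(3*ρ/16) := by
            have hmul := mul_le_mul_of_nonneg_right hKε (show (0:ℝ) ≤ 3*ρ/16 by positivity)
            calc (9:ℝ)*ε/4 = 12*ε/ρ*(3*ρ/16) := by field_simp; ring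
            _ ≤ K*(3*ρ/16) := hmul
          rw [hKterm]
          linarith
        linarith
      · rcases eq_or_lt_of_le hm2 with hsp | hsp
        · -- sphere part
          have hw : w m ≤ ε := hbdd m hm.2
          have hb : ε ≤ b m := by
            rw [hbm]
            have h5 : (s m)^2 ≤ ρ^2/16 := by nlinarith [hm1.1, le_of_lt h4]
            have h6 : ‖m - x₀‖^2 = ρ^2/4 := by rw [hsp]; ring
            have h7 : 9*ε/8 ≤ c1*(‖m - x₀‖^2 - (s m)^2) := by
              have hmul : c1*(3*ρ^2/16) ≤ c1*(‖m - x₀‖^2 - (s m)^2) := by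
                apply mul_le_mul_of_nonneg_left _ hc10
                rw [h6]; linarith
              calc (9:ℝ)*ε/8 = (6*ε/ρ^2)*(3*ρ^2/16) := by field_simp; ring
              _ = c1*(3*ρ^2/16) := by rw [hc1def]
              _ ≤ _ := hmul
            have h9 : 0 ≤ K*(s m - (s m)^2/ρ) := by
              apply mul_nonneg hK0.le
              have h10 : (s m)^2/ρ ≤ s m := by
                rw [div_le_iff₀ hρ]
                nlinarith [hm1.1, le_of_lt h4]
              linarith
            linarith
          linarith
        · -- interior: contradiction
          exfalso
          have hsm : s m = m i - x₀ i := by rw [hsdef]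
          obtain ⟨d, φ, hsum, hdφ, hev⟩ := hsub m (hsm ▸ hpos) (hsm ▸ h4)
            (by rwa [mem_ball, dist_eq_norm])
          have hUopen : IsOpen (s ⁻¹' (Set.Ioo 0 (ρ/4)) ∩ ball x₀ (ρ/2)) :=
            (isOpen_Ioo.preimage hscont).inter isOpen_ball
          have hmU : m ∈ s ⁻¹' (Set.Ioo 0 (ρ/4)) ∩ ball x₀ (ρ/2) :=
            ⟨⟨hpos, h4⟩, by rwa [mem_ball, dist_eq_norm]⟩
          have hUsub : s ⁻¹' (Set.Ioo 0 (ρ/4)) ∩ ball x₀ (ρ/2) ⊆ RS := fun y hy =>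
            ⟨⟨hy.1.1.le, hy.1.2.le⟩, ball_subset_closedBall hy.2⟩
          have hloc : IsLocalMax (fun y => w y - b y) m := by
            filter_upwards [hUopen.mem_nhds hmU] with y hy
            exact hmax (hUsub hy)
          have hkey : ∀ j : Fin N,
              d j ≤ 2*(c1*(1 - (if i = j then (1:ℝ) else 0)) -
                K*(if i = j then (1:ℝ) else 0)/ρ) := by
            intro j
            obtain ⟨δ, hδdef⟩ : ∃ r : ℝ, r = if i = j then (1:ℝ) else 0 := ⟨_, rfl⟩
            rw [← hδdef]
            obtain ⟨aj, hajdef⟩ : ∃ r : ℝ, r = (m - x₀) j := ⟨_, rfl⟩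
            obtain ⟨Bj, hBjdef⟩ : ∃ r : ℝ,
              r = 2*c1*aj - 2*c1*(s m)*δ + K*δ - 2*K*(s m)*δ/ρ := ⟨_, rfl⟩
            obtain ⟨Cj, hCjdef⟩ : ∃ r : ℝ, r = c1*(1 - δ) - K*δ/ρ := ⟨_, rfl⟩
            have hline : ∀ τ : ℝ, b (m + τ • EuclideanSpace.single j (1:ℝ)) =
                b m + Bj*τ + Cj*τ^2 := by
              intro τ
              have hsline : s (m + τ • EuclideanSpace.single j (1:ℝ)) = s m + δ*τ := by
                rw [hsdef, hδdef]
                simp only [PiLp.add_apply, PiLp.smul_apply,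
                  EuclideanSpace.single_apply, smul_eq_mul]
                ring
              have hnline : ‖(m + τ • EuclideanSpace.single j (1:ℝ)) - x₀‖^2 =
                  ‖m - x₀‖^2 + 2*aj*τ + τ^2 := by
                rw [add_sub_right_comm, norm_add_line_sq]
                simp [hajdef]
              have hb1 : b (m + τ • EuclideanSpace.single j (1:ℝ)) =
                  c1*(‖(m + τ • EuclideanSpace.single j (1:ℝ)) - x₀‖^2 -
                    (s (m + τ • EuclideanSpace.single j (1:ℝ)))^2) +
                  K*((s (m + τ • EuclideanSpace.single j (1:ℝ))) -
                    (s (m + τ • EuclideanSpace.single j (1:ℝ)))^2/ρ) :=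
                hbeq _
              rw [hb1, hsline, hnline, hbm, hBjdef, hCjdef, hδdef]
              by_cases hij : i = j
              · simp only [if_pos hij]
                field_simp
                ring
              · simp only [if_neg hij]
                field_simp
                ring
            have hblineF : (fun τ : ℝ => b (m + τ • EuclideanSpace.single j (1:ℝ))) =
                fun τ => b m + Bj*τ + Cj*τ^2 := funext hline
            have hqd : HasDerivAt (fun t : ℝ => Bj + 2*Cj*t) (2*Cj) 0 := by
              simpa using ((hasDerivAt_id (0:ℝ)).const_mul (2*Cj)).const_add Bj
            have hev' : ∀ᶠ t in nhds (0:ℝ), HasDerivAt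
                (fun τ => w (m + τ • EuclideanSpace.single j (1:ℝ)) -
                  b (m + τ • EuclideanSpace.single j (1:ℝ)))
                (φ j t - (Bj + 2*Cj*t)) t := by
              filter_upwards [hev j] with t ht
              have hb2 : HasDerivAt (fun τ : ℝ => b (m + τ • EuclideanSpace.single j (1:ℝ)))
                  (Bj + 2*Cj*t) t := by
                rw [hblineF]; exact quad_hasDerivAt (b m) Bj Cj t
              exact ht.sub hb2
            have hφ' : HasDerivAt (fun t : ℝ => φ j t - (Bj + 2*Cj*t)) (d j - 2*Cj) 0 :=
              (hdφ j).sub hqd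
            have hlm : IsLocalMax (fun τ : ℝ =>
                w (m + τ • EuclideanSpace.single j (1:ℝ)) -
                  b (m + τ • EuclideanSpace.single j (1:ℝ))) 0 := by
              have hcontt : Continuous (fun τ : ℝ => m + τ • EuclideanSpace.single j (1:ℝ)) := by
                continuity
              have h00 : m + (0:ℝ) • EuclideanSpace.single j (1:ℝ) = m := by simp
              have htend : Filter.Tendsto (fun τ : ℝ => m + τ • EuclideanSpace.single j (1:ℝ))
                  (nhds 0) (nhds m) := by
                simpa [h00] using hcontt.tendsto (0:ℝ)
              have hup := htend.eventually hloc
              filter_upwards [hup] with τ hτ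
              simpa [h00] using hτ
            have hd2 := second_deriv_test hev' hφ' hlm
            linarith
          have hδsum : ∑ j : Fin N, (if i = j then (1:ℝ) else 0) = 1 := by simp
          have hsum2 : ∑ j, d j ≤ 2*(c1*((N:ℝ) - 1) - K/ρ) := by
            have h1 := Finset.sum_le_sum (fun j (_ : j ∈ Finset.univ) => hkey j)
            have hexp : ∀ j : Fin N, 2*(c1*(1 - (if i = j then (1:ℝ) else 0)) -
                K*(if i = j then (1:ℝ) else 0)/ρ)
                = 2*c1 - (2*c1 + 2*(K/ρ))*(if i = j then (1:ℝ) else 0) := by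
              intro j; split_ifs <;> ring
            have h2 : ∑ j : Fin N, (2*(c1*(1 - (if i = j then (1:ℝ) else 0)) -
                K*(if i = j then (1:ℝ) else 0)/ρ)) = 2*(c1*((N:ℝ) - 1) - K/ρ) := by
              rw [Finset.sum_congr rfl (fun j _ => hexp j), Finset.sum_sub_distrib,
                Finset.sum_const, ← Finset.mul_sum, hδsum]
              simp only [Finset.card_univ, Fintype.card_fin, nsmul_eq_mul]
              ring
            calc ∑ j, d j ≤ _ := h1
            _ = _ := h2
          have hfinal : 2*(c1*((N:ℝ) - 1) - K/ρ) = -M - 2*(κ/ρ) := by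
            rw [hc1def, hKdef]; field_simp; ring
          have hκρ : 0 < κ/ρ := div_pos hκ hρ
          rw [hfinal] at hsum2
          linarith
  -- conclusion
  intro τ hτ
  set y : E := x₀ + τ • EuclideanSpace.single i (1:ℝ) with hydef
  have hsy : s y = τ := by
    rw [hsdef, hydef]
    simp [PiLp.add_apply, PiLp.smul_apply, EuclideanSpace.single_apply]
  have hny : ‖y - x₀‖ = τ := by
    rw [hydef, add_sub_cancel_left, norm_smul, EuclideanSpace.norm_single]
    simp [abs_of_nonneg hτ.1]
  have hyRS : y ∈ RS := by
    constructor
    · rw [Set.mem_preimage, hsy]; exact hτ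
    · rw [mem_closedBall, dist_eq_norm, hny]; linarith [hτ.2, hρ.le]
  have h1 : w y - b y ≤ 0 := le_trans (hmax hyRS) hzm
  have hby : b y = K*(τ - τ^2/ρ) := by
    rw [hbeq y, hsy, hny]; ring
  have h2 : K*(τ - τ^2/ρ) ≤ K*τ := by
    apply mul_le_mul_of_nonneg_left _ hK0.le
    have : 0 ≤ τ^2/ρ := by positivity
    linarith
  calc w y ≤ b y := by linarith
  _ = K*(τ - τ^2/ρ) := hby
  _ ≤ K*τ := h2

end Barrier

section CoordBound
variable {N : ℕ}
local notation "E" => EuclideanSpace ℝ (Fin N)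

set_option maxHeartbeats 2000000 in
lemma coord_bound (hN : 3 ≤ N) {α p : ℝ} {u : E → ℝ}
    (hu : IsHenonSolution N α p u) (x₀ : E) (hx₀ : x₀ ≠ 0)
    (ε M κ : ℝ) (hε : 0 ≤ ε) (hM : 0 ≤ M) (hκ : 0 < κ)
    (hMb : ∀ y ∈ closedBall x₀ (‖x₀‖/2), ‖y‖^α * u y^p ≤ 2*M)
    (hεb : ∀ y ∈ closedBall x₀ (‖x₀‖/2), |u y - u 0| ≤ ε) (i : Fin N) :
    |fderiv ℝ u x₀ (EuclideanSpace.single i (1:ℝ))| ≤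
      κ + ‖x₀‖*M/2 + 6*((N:ℝ)-1)*ε/‖x₀‖ := by
  obtain ⟨hc, hpos, hC2, heqn⟩ := hu
  set ρ : ℝ := ‖x₀‖ with hρdef
  have hρ : 0 < ρ := norm_pos_iff.2 hx₀
  set Ω : Set E := {(0:E)}ᶜ with hΩdef
  have hΩ : IsOpen Ω := isOpen_compl_singleton
  have hmemΩ : ∀ y : E, y ∈ closedBall x₀ (ρ/2) → y ∈ Ω := by
    intro y hy
    rw [mem_closedBall, dist_eq_norm] at hy
    have h1 : ρ ≤ ‖y‖ + ‖y - x₀‖ := by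
      calc ρ = ‖y - (y - x₀)‖ := by rw [hρdef]; congr 1; abel
      _ ≤ ‖y‖ + ‖y - x₀‖ := norm_sub_le _ _
    have h2 : 0 < ‖y‖ := by linarith
    simp only [hΩdef, Set.mem_compl_iff, Set.mem_singleton_iff]
    exact norm_pos_iff.1 h2
  have hf0 : ∀ y : E, 0 ≤ ‖y‖^α * u y^p := fun y =>
    mul_nonneg (Real.rpow_nonneg (norm_nonneg _) _) (Real.rpow_nonneg (hpos y).le _)
  have hlap : ∀ y : E, y ≠ 0 →
      ∑ j, fderiv ℝ (fderiv ℝ u) y (EuclideanSpace.single j (1:ℝ))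
        (EuclideanSpace.single j (1:ℝ)) = -(‖y‖^α * u y^p) := by
    intro y hy
    rw [← laplacian_eq_sum]
    have := heqn y hy
    linarith
  have hyne : ∀ y : E, y ∈ Ω → y ≠ 0 := fun y hy => hy
  -- the reflected-difference function and its negative
  obtain ⟨w, hwdef⟩ : ∃ f : E → ℝ, f = fun y => (u y - u (Refl x₀ i y))/2 := ⟨_, rfl⟩
  have hweq : ∀ y, w y = (u y - u (Refl x₀ i y))/2 := fun y => by rw [hwdef]
  have hReflcont : Continuous (Refl x₀ i) := by
    unfold Refl
    exact continuous_id.add ((continuous_const.mul (continuous_const.sub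
      ((EuclideanSpace.proj i).continuous))).smul continuous_const)
  have hwc : Continuous w := by
    rw [hwdef]
    exact ((hc.sub (hc.comp hReflcont)).div_const 2)
  have hReflmem : ∀ y ∈ closedBall x₀ (ρ/2), Refl x₀ i y ∈ closedBall x₀ (ρ/2) := by
    intro y hy
    rw [mem_closedBall, dist_eq_norm] at hy ⊢
    rwa [norm_refl_sub]
  have hwflat : ∀ y : E, y i = x₀ i → w y = 0 := by
    intro y hy
    rw [hweq, refl_of_coord_eq x₀ i y hy, sub_self, zero_div]
  have hwbdd : ∀ y ∈ closedBall x₀ (ρ/2), |w y| ≤ ε := by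
    intro y hy
    rw [hweq]
    have h1 := hεb y hy
    have h2 := hεb _ (hReflmem y hy)
    rw [abs_div]
    rw [show |(2:ℝ)| = 2 by norm_num]
    rw [div_le_iff₀ (by norm_num : (0:ℝ) < 2)]
    calc |u y - u (Refl x₀ i y)| = |(u y - u 0) - (u (Refl x₀ i y) - u 0)| := by ring_nf
    _ ≤ |u y - u 0| + |u (Refl x₀ i y) - u 0| := abs_sub _ _
    _ ≤ ε + ε := add_le_add h1 h2
    _ = ε * 2 := by ring
  -- the subsolution structure, for w and -w simultaneously
  have hsub : ∀ (sgn : ℝ), sgn = 1 ∨ sgn = -1 → ∀ y : E, 0 < y i - x₀ i → y i - x₀ i < ρ/4 →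
      y ∈ ball x₀ (ρ/2) →
      ∃ (d : Fin N → ℝ) (φ : Fin N → ℝ → ℝ), -M ≤ ∑ j, d j ∧
        (∀ j, HasDerivAt (φ j) (d j) 0) ∧
        (∀ j, ∀ᶠ t in nhds (0:ℝ), HasDerivAt
          (fun τ => sgn * w (y + τ • EuclideanSpace.single j (1:ℝ))) (φ j t) t) := by
    intro sgn hsgn y hy1 hy2 hy3
    have hycb : y ∈ closedBall x₀ (ρ/2) := ball_subset_closedBall hy3
    have hyΩ : y ∈ Ω := hmemΩ y hycb
    have hRyΩ : Refl x₀ i y ∈ Ω := hmemΩ _ (hReflmem y hycb)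
    set Ry : E := Refl x₀ i y with hRydef
    refine ⟨fun j => sgn * ((fderiv ℝ (fderiv ℝ u) y (EuclideanSpace.single j (1:ℝ))
        (EuclideanSpace.single j (1:ℝ)) -
      fderiv ℝ (fderiv ℝ u) Ry (EuclideanSpace.single j (1:ℝ))
        (EuclideanSpace.single j (1:ℝ)))/2),
      fun j t => sgn * ((fderiv ℝ u (y + t • EuclideanSpace.single j (1:ℝ))
          (EuclideanSpace.single j (1:ℝ)) -
        (if j = i then (-1:ℝ) else 1) * fderiv ℝ u
          (Ry + ((if j = i then (-1:ℝ) else 1) * t) • EuclideanSpace.single j (1:ℝ))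
          (EuclideanSpace.single j (1:ℝ)))/2), ?_, ?_, ?_⟩
    · -- sum bound
      have hsumeq : ∑ j : Fin N, sgn * ((fderiv ℝ (fderiv ℝ u) y (EuclideanSpace.single j (1:ℝ))
          (EuclideanSpace.single j (1:ℝ)) -
        fderiv ℝ (fderiv ℝ u) Ry (EuclideanSpace.single j (1:ℝ))
          (EuclideanSpace.single j (1:ℝ)))/2)
          = sgn * ((-(‖y‖^α * u y^p) + (‖Ry‖^α * u Ry^p))/2) := by
        rw [← Finset.mul_sum]
        congr 1
        rw [← Finset.sum_div]
        rw [Finset.sum_sub_distrib]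
        rw [hlap y (hyne y hyΩ), hlap Ry (hyne Ry hRyΩ)]
        ring
      rw [hsumeq]
      have hfy := hMb y hycb
      have hfRy := hMb Ry (hReflmem y hycb)
      have hfy0 := hf0 y
      have hfRy0 := hf0 Ry
      rcases hsgn with h | h <;> rw [h] <;> nlinarith
    · -- derivative of φ j at 0
      intro j
      set e : E := EuclideanSpace.single j (1:ℝ) with hedef
      set σ : ℝ := if j = i then (-1:ℝ) else 1 with hσdef
      have hσsq : σ * σ = 1 := by rw [hσdef]; split_ifs <;> norm_num
      have part1 : HasDerivAt (fun t : ℝ => fderiv ℝ u (y + t • e) e)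
          (fderiv ℝ (fderiv ℝ u) y e e) 0 := fderiv_line_hasDerivAt hΩ hC2 hyΩ e
      have part2 : HasDerivAt (fun t : ℝ => fderiv ℝ u (Ry + t • e) e)
          (fderiv ℝ (fderiv ℝ u) Ry e e) 0 := fderiv_line_hasDerivAt hΩ hC2 hRyΩ e
      have hlin : HasDerivAt (fun t : ℝ => σ * t) σ 0 := by
        simpa using (hasDerivAt_id (0:ℝ)).const_mul σ
      have part2' : HasDerivAt (fun t : ℝ => fderiv ℝ u (Ry + (σ * t) • e) e)
          (fderiv ℝ (fderiv ℝ u) Ry e e * σ) 0 := by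
        have h0 : σ * (0:ℝ) = 0 := by ring
        have := (h0 ▸ part2).comp 0 hlin
        exact this
      have hcomb := ((part1.sub (part2'.const_mul σ)).div_const 2).const_mul sgn
      have : σ * (fderiv ℝ (fderiv ℝ u) Ry e e * σ) = fderiv ℝ (fderiv ℝ u) Ry e e := by
        linear_combination (fderiv ℝ (fderiv ℝ u) Ry e e) * hσsq
      exact hcomb.congr_deriv (by rw [this])
    · -- eventual family
      intro j
      set e : E := EuclideanSpace.single j (1:ℝ) with hedef
      set σ : ℝ := if j = i then (-1:ℝ) else 1 with hσdef
      have hwline : ∀ τ : ℝ, w (y + τ • e) = (u (y + τ • e) - u (Ry + (σ * τ) • e))/2 := by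
        intro τ
        rw [hweq]
        congr 3
        rw [hedef, refl_add_line, hRydef]
        congr 2
        rw [hσdef]
        split_ifs <;> ring
      have hev1 := line_eventually_hasDerivAt hΩ hC2 e hyΩ
      have hcontmem : ∀ᶠ t in nhds (0:ℝ), Ry + (σ * t) • e ∈ Ω := by
        have hcont2 : Continuous (fun t : ℝ => Ry + (σ * t) • e) := by continuity
        have h0 : Ry + (σ * (0:ℝ)) • e ∈ Ω := by simpa using hRyΩ
        exact hcont2.continuousAt.eventually_mem (hΩ.mem_nhds h0)
      filter_upwards [hev1, hcontmem] with t ht1 ht2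
      have hg := line_hasDerivAt hΩ hC2 e ht2
      have hlin_t : HasDerivAt (fun τ : ℝ => σ * τ) σ t := by
        simpa using (hasDerivAt_id t).const_mul σ
      have hg2 := hg.comp t hlin_t
      have hcomb := ((ht1.sub hg2).div_const 2).const_mul sgn
      have hfun : (fun τ : ℝ => sgn * w (y + τ • e)) =
          fun τ => sgn * ((u (y + τ • e) - u (Ry + (σ * τ) • e))/2) := by
        funext τ; rw [hwline]
      rw [hfun]
      exact hcomb.congr_deriv (by ring)
  -- apply the barrier to w and -w
  have hw1 := barrier hN x₀ i ρ ε M κ hρ hε hM hκ w hwc hwflat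
    (fun y hy => (abs_le.1 (hwbdd y hy)).2)
    (by
      intro y h1 h2 h3
      obtain ⟨d, φ, hs1, hs2, hs3⟩ := hsub 1 (Or.inl rfl) y h1 h2 h3
      exact ⟨d, φ, hs1, hs2, fun j => by
        filter_upwards [hs3 j] with t ht
        simpa using ht⟩)
  have hw2 := barrier hN x₀ i ρ ε M κ hρ hε hM hκ (fun y => -(w y))
    (hwc.neg)
    (fun y hy => by show -(w y) = 0; rw [hwflat y hy, neg_zero])
    (fun y hy => by
      show -(w y) ≤ ε
      have := (abs_le.1 (hwbdd y hy)).1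
      linarith)
    (by
      intro y h1 h2 h3
      obtain ⟨d, φ, hs1, hs2, hs3⟩ := hsub (-1) (Or.inr rfl) y h1 h2 h3
      exact ⟨d, φ, hs1, hs2, fun j => by
        filter_upwards [hs3 j] with t ht
        simpa [neg_one_mul] using ht⟩)
  -- derivative of w along e i at 0
  set e : E := EuclideanSpace.single i (1:ℝ) with hedef
  have hx₀Ω : x₀ ∈ Ω := hmemΩ x₀ (mem_closedBall_self (by positivity))
  have hwline0 : ∀ τ : ℝ, w (x₀ + τ • e) = (u (x₀ + τ • e) - u (x₀ + (-τ) • e))/2 := by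
    intro τ
    rw [hweq]
    congr 3
    rw [hedef, refl_add_line, refl_self]
    simp
  have hu1 : HasDerivAt (fun τ : ℝ => u (x₀ + τ • e)) (fderiv ℝ u x₀ e) 0 := by
    have h0 : x₀ + (0:ℝ) • e ∈ Ω := by simpa using hx₀Ω
    have := line_hasDerivAt hΩ hC2 e h0
    simpa using this
  have hu2 : HasDerivAt (fun τ : ℝ => u (x₀ + (-τ) • e)) (-(fderiv ℝ u x₀ e)) 0 := by
    have hneg : HasDerivAt (fun τ : ℝ => -τ) (-1 : ℝ) 0 := by
      exact (hasDerivAt_id (0:ℝ)).neg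
    have h0 : x₀ + (-(0:ℝ)) • e ∈ Ω := by simpa using hx₀Ω
    have hg := line_hasDerivAt hΩ hC2 e h0
    have := hg.comp 0 hneg
    exact this.congr_deriv (by simp)
  have hgD : HasDerivAt (fun τ : ℝ => w (x₀ + τ • e)) (fderiv ℝ u x₀ e) 0 := by
    have hfun : (fun τ : ℝ => w (x₀ + τ • e)) =
        fun τ => (u (x₀ + τ • e) - u (x₀ + (-τ) • e))/2 := funext hwline0
    rw [hfun]
    have := (hu1.sub hu2).div_const 2
    exact this.congr_deriv (by ring)
  have hg0 : w (x₀ + (0:ℝ) • e) = 0 := by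
    have : x₀ + (0:ℝ) • e = x₀ := by simp
    rw [this, hweq, refl_self, sub_self, zero_div]
  have hbound : ∀ τ ∈ Set.Ioc (0:ℝ) (ρ/4), |w (x₀ + τ • e)| ≤
      (κ + ρ*M/2 + 6*((N:ℝ)-1)*ε/ρ) * τ := by
    intro τ hτ
    rw [abs_le]
    constructor
    · have := hw2 τ ⟨hτ.1.le, hτ.2⟩
      simp only [hedef] at this ⊢
      linarith
    · have := hw1 τ ⟨hτ.1.le, hτ.2⟩
      simp only [hedef] at this ⊢
      linarith
  have hfinal := abs_deriv_le_of_abs_le hgD hg0 (by positivity : 0 < ρ/4) hbound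
  simpa [hedef] using hfinal

end CoordBound

set_option maxHeartbeats 2000000 in
theorem henon_radial_derivative_vanishes (N : ℕ) (hN : 3 ≤ N) (α p : ℝ)
    (hα : -2 < α) (hp : 1 < p)
    (u : EuclideanSpace ℝ (Fin N) → ℝ) (hu : IsHenonSolution N α p u) :
    Tendsto (fun x : EuclideanSpace ℝ (Fin N) => (inner ℝ (gradient u x) x : ℝ))
      (nhdsWithin 0 {(0 : EuclideanSpace ℝ (Fin N))}ᶜ) (nhds 0) := by
  have hc : Continuous u := hu.1
  have hpos : ∀ x, 0 < u x := hu.2.1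
  have hN0 : (0:ℝ) < (N:ℝ) := by positivity
  -- inner product with gradient is the directional derivative
  have hinner : ∀ x : EuclideanSpace ℝ (Fin N),
      (inner ℝ (gradient u x) x : ℝ) = fderiv ℝ u x x := by
    intro x
    have h1 : gradient u x = (InnerProductSpace.toDual ℝ _).symm (fderiv ℝ u x) := rfl
    rw [h1, InnerProductSpace.toDual_symm_apply]
  -- decomposition in coordinates
  have hdecomp : ∀ x : EuclideanSpace ℝ (Fin N),
      x = ∑ i, x i • EuclideanSpace.single i (1:ℝ) := by
    intro x
    ext j
    rw [WithLp.ofLp_sum, Finset.sum_apply]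
    simp [EuclideanSpace.single_apply, PiLp.smul_apply]
  have hsum : ∀ x : EuclideanSpace ℝ (Fin N), fderiv ℝ u x x =
      ∑ i, x i * fderiv ℝ u x (EuclideanSpace.single i (1:ℝ)) := by
    intro x
    have h : fderiv ℝ u x (∑ i, x i • EuclideanSpace.single i (1:ℝ)) =
        ∑ i, x i * fderiv ℝ u x (EuclideanSpace.single i (1:ℝ)) := by
      rw [map_sum]
      exact Finset.sum_congr rfl fun i _ => by
        rw [ContinuousLinearMap.map_smul]; rfl
    rw [← hdecomp x] at h
    exact h
  -- sup of u on closed ball of radius 2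
  obtain ⟨ymax, hymax, hCmax⟩ := (isCompact_closedBall (0:EuclideanSpace ℝ (Fin N)) 2).exists_isMaxOn
    ⟨0, mem_closedBall_self (by norm_num)⟩ hc.continuousOn
  obtain ⟨Cu, hCudef⟩ : ∃ c : ℝ, c = u ymax := ⟨_, rfl⟩
  have hCu : ∀ y ∈ closedBall (0:EuclideanSpace ℝ (Fin N)) 2, u y ≤ Cu := fun y hy => by
    rw [hCudef]; exact hCmax hy
  have hCu0 : 0 < Cu := lt_of_lt_of_le (hpos ymax) (by rw [hCudef])
  obtain ⟨cA, hcAdef⟩ : ∃ c : ℝ, c = max ((1/2:ℝ)^α) ((3/2:ℝ)^α) := ⟨_, rfl⟩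
  have hcA0 : 0 < cA := by
    rw [hcAdef]
    exact lt_max_of_lt_left (Real.rpow_pos_of_pos (by norm_num) α)
  -- the key local bound on the right-hand side
  have hMbound : ∀ x₀ : EuclideanSpace ℝ (Fin N), x₀ ≠ 0 → ‖x₀‖ ≤ 1 →
      ∀ y ∈ closedBall x₀ (‖x₀‖/2), ‖y‖^α * u y^p ≤ 2*(cA * ‖x₀‖^α * Cu^p / 2) := by
    intro x₀ hx₀ hr1 y hy
    have hr0 : 0 < ‖x₀‖ := norm_pos_iff.2 hx₀
    rw [mem_closedBall, dist_eq_norm] at hy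
    have hylow : ‖x₀‖/2 ≤ ‖y‖ := by
      have h1 : ‖x₀‖ ≤ ‖y‖ + ‖y - x₀‖ := by
        calc ‖x₀‖ = ‖y - (y - x₀)‖ := by congr 1; abel
        _ ≤ ‖y‖ + ‖y - x₀‖ := norm_sub_le _ _
      linarith
    have hyhigh : ‖y‖ ≤ 3*‖x₀‖/2 := by
      have h1 : ‖y‖ ≤ ‖x₀‖ + ‖y - x₀‖ := by
        calc ‖y‖ = ‖x₀ + (y - x₀)‖ := by congr 1; abel
        _ ≤ ‖x₀‖ + ‖y - x₀‖ := norm_add_le _ _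
      linarith
    have hy2 : y ∈ closedBall (0:EuclideanSpace ℝ (Fin N)) 2 := by
      rw [mem_closedBall, dist_zero_right]
      linarith
    have hup : u y ^ p ≤ Cu ^ p :=
      Real.rpow_le_rpow (hpos y).le (hCu y hy2) (by linarith)
    have hna : ‖y‖^α ≤ cA * ‖x₀‖^α := by
      rcases le_or_gt 0 α with hα0 | hα0
      · have h1 : ‖y‖^α ≤ (3/2*‖x₀‖)^α :=
          Real.rpow_le_rpow (norm_nonneg y) (by linarith) hα0
        have h2 : ((3/2:ℝ)*‖x₀‖)^α = (3/2:ℝ)^α * ‖x₀‖^α :=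
          Real.mul_rpow (by norm_num) (norm_nonneg x₀)
        have h3 : (3/2:ℝ)^α * ‖x₀‖^α ≤ cA * ‖x₀‖^α := by
          apply mul_le_mul_of_nonneg_right _ (Real.rpow_nonneg (norm_nonneg x₀) α)
          rw [hcAdef]; exact le_max_right _ _
        calc ‖y‖^α ≤ (3/2*‖x₀‖)^α := h1
        _ = (3/2:ℝ)^α * ‖x₀‖^α := h2
        _ ≤ cA * ‖x₀‖^α := h3
      · have h1 : ‖y‖^α ≤ (‖x₀‖/2)^α :=
          Real.rpow_le_rpow_of_nonpos (by positivity) hylow hα0.le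
        have h2 : (‖x₀‖/2)^α = (1/2:ℝ)^α * ‖x₀‖^α := by
          rw [show ‖x₀‖/2 = (1/2:ℝ)*‖x₀‖ by ring]
          exact Real.mul_rpow (by norm_num) (norm_nonneg x₀)
        have h3 : (1/2:ℝ)^α * ‖x₀‖^α ≤ cA * ‖x₀‖^α := by
          apply mul_le_mul_of_nonneg_right _ (Real.rpow_nonneg (norm_nonneg x₀) α)
          rw [hcAdef]; exact le_max_left _ _
        calc ‖y‖^α ≤ (‖x₀‖/2)^α := h1
        _ = (1/2:ℝ)^α * ‖x₀‖^α := h2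
        _ ≤ cA * ‖x₀‖^α := h3
    calc ‖y‖^α * u y^p ≤ (cA * ‖x₀‖^α) * Cu^p := by
          apply mul_le_mul hna hup (Real.rpow_nonneg (hpos y).le p)
          positivity
    _ = 2*(cA * ‖x₀‖^α * Cu^p / 2) := by ring
  -- the epsilon-delta argument
  rw [Metric.tendsto_nhdsWithin_nhds]
  intro η hη
  obtain ⟨ε', hε'def⟩ : ∃ e : ℝ, e = η/(28*(N:ℝ)^2) := ⟨_, rfl⟩
  have hε'0 : 0 < ε' := by rw [hε'def]; positivity
  obtain ⟨δ₁, hδ₁0, hδ₁⟩ := Metric.continuousAt_iff.1 hc.continuousAt ε' hε'0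
  obtain ⟨C₂, hC₂def⟩ : ∃ c : ℝ, c = (N:ℝ)*cA*Cu^p/4 := ⟨_, rfl⟩
  have hC₂0 : 0 ≤ C₂ := by
    rw [hC₂def]
    have : (0:ℝ) ≤ Cu^p := Real.rpow_nonneg hCu0.le p
    positivity
  obtain ⟨T, hTdef⟩ : ∃ t : ℝ, t = η/(2*(C₂+1)) := ⟨_, rfl⟩
  have hT0 : 0 < T := by rw [hTdef]; positivity
  have h2α : (0:ℝ) < 2 + α := by linarith
  obtain ⟨δ₂, hδ₂def⟩ : ∃ d : ℝ, d = T^((2+α)⁻¹) := ⟨_, rfl⟩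
  have hδ₂0 : 0 < δ₂ := by rw [hδ₂def]; exact Real.rpow_pos_of_pos hT0 _
  refine ⟨min (min 1 (δ₁/2)) δ₂, by positivity, ?_⟩
  intro x hx hdist
  have hx0 : x ≠ 0 := hx
  rw [dist_zero_right] at hdist
  have hr0 : 0 < ‖x‖ := norm_pos_iff.2 hx0
  have hr1 : ‖x‖ ≤ 1 := le_trans hdist.le (le_trans (min_le_left _ _) (min_le_left _ _))
  have hrδ₁ : ‖x‖ < δ₁/2 := lt_of_lt_of_le hdist (le_trans (min_le_left _ _) (min_le_right _ _))
  have hrδ₂ : ‖x‖ < δ₂ := lt_of_lt_of_le hdist (min_le_right _ _)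
  -- oscillation bound
  have hεb : ∀ y ∈ closedBall x (‖x‖/2), |u y - u 0| ≤ ε' := by
    intro y hy
    rw [mem_closedBall, dist_eq_norm] at hy
    have hyn : ‖y‖ ≤ 3*‖x‖/2 := by
      have h1 : ‖y‖ ≤ ‖x‖ + ‖y - x‖ := by
        calc ‖y‖ = ‖x + (y - x)‖ := by congr 1; abel
        _ ≤ ‖x‖ + ‖y - x‖ := norm_add_le _ _
      linarith
    have : dist y 0 < δ₁ := by
      rw [dist_zero_right]
      linarith
    exact (le_of_lt (by simpa [Real.dist_eq] using hδ₁ this))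
  obtain ⟨M, hMdef⟩ : ∃ m : ℝ, m = cA * ‖x‖^α * Cu^p / 2 := ⟨_, rfl⟩
  have hM0 : 0 ≤ M := by
    rw [hMdef]
    have h1 : (0:ℝ) ≤ ‖x‖^α := Real.rpow_nonneg (norm_nonneg x) α
    have h2 : (0:ℝ) ≤ Cu^p := Real.rpow_nonneg hCu0.le p
    positivity
  have hMb : ∀ y ∈ closedBall x (‖x‖/2), ‖y‖^α * u y^p ≤ 2*M := by
    intro y hy
    rw [hMdef]
    exact hMbound x hx0 hr1 y hy
  have hκ0 : 0 < ε'/‖x‖ := by positivity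
  have hcoord := fun i => coord_bound hN hu x hx0 ε' M (ε'/‖x‖) hε'0.le hM0 hκ0 hMb hεb i
  -- assemble
  rw [Real.dist_eq, sub_zero, hinner, hsum]
  obtain ⟨K, hKdef⟩ : ∃ k : ℝ, k = ε'/‖x‖ + ‖x‖*M/2 + 6*((N:ℝ)-1)*ε'/‖x‖ := ⟨_, rfl⟩
  have hK0 : 0 ≤ K := by
    rw [hKdef]
    have h1 : (0:ℝ) ≤ 6*((N:ℝ)-1)*ε'/‖x‖ := by
      apply div_nonneg _ hr0.le
      have : (3:ℝ) ≤ (N:ℝ) := by exact_mod_cast hN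
      nlinarith
    have h2 : (0:ℝ) ≤ ‖x‖*M/2 := by positivity
    have h3 : (0:ℝ) ≤ ε'/‖x‖ := by positivity
    linarith
  have habs : |∑ i, x i * fderiv ℝ u x (EuclideanSpace.single i (1:ℝ))| ≤ (N:ℝ)*(‖x‖*K) := by
    calc |∑ i, x i * fderiv ℝ u x (EuclideanSpace.single i (1:ℝ))|
        ≤ ∑ i, |x i * fderiv ℝ u x (EuclideanSpace.single i (1:ℝ))| :=
          Finset.abs_sum_le_sum_abs _ _
    _ ≤ ∑ _i : Fin N, ‖x‖*K := by
          refine Finset.sum_le_sum fun i _ => ?_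
          rw [abs_mul]
          apply mul_le_mul (abs_coord_le_norm x i) _ (abs_nonneg _) (norm_nonneg x)
          rw [hKdef]
          exact hcoord i
    _ = (N:ℝ)*(‖x‖*K) := by
          rw [Finset.sum_const, Finset.card_univ, Fintype.card_fin, nsmul_eq_mul]
  have hNK : (N:ℝ)*(‖x‖*K) = (N:ℝ)*ε' + C₂*‖x‖^((2:ℝ)+α) + 6*(N:ℝ)*((N:ℝ)-1)*ε' := by
    rw [hKdef, hMdef, hC₂def]
    have hrpow : ‖x‖^((2:ℝ)+α) = ‖x‖^(2:ℕ) * ‖x‖^α := by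
      rw [Real.rpow_add hr0]
      congr 1
      rw [← Real.rpow_natCast ‖x‖ 2]
      norm_num
    rw [hrpow]
    field_simp
    ring
  have hsmall1 : (N:ℝ)*ε' + 6*(N:ℝ)*((N:ℝ)-1)*ε' ≤ η/4 := by
    rw [hε'def]
    have hN3 : (3:ℝ) ≤ (N:ℝ) := by exact_mod_cast hN
    have h1 : (N:ℝ)*(η/(28*(N:ℝ)^2)) + 6*(N:ℝ)*((N:ℝ)-1)*(η/(28*(N:ℝ)^2)) =
        (6*(N:ℝ)^2 - 5*(N:ℝ))*η/(28*(N:ℝ)^2) := by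
      field_simp
      ring
    rw [h1, div_le_div_iff₀ (by positivity) (by norm_num : (0:ℝ) < 4)]
    nlinarith [mul_nonneg hη.le (by positivity : (0:ℝ) ≤ 4*(N:ℝ)^2 + 20*(N:ℝ))]
  have hsmall2 : C₂*‖x‖^((2:ℝ)+α) < η/2 := by
    have hrT : ‖x‖^((2:ℝ)+α) < T := by
      have h1 : ‖x‖^((2:ℝ)+α) < δ₂^((2:ℝ)+α) :=
        Real.rpow_lt_rpow (norm_nonneg x) hrδ₂ h2α
      have h2 : δ₂^((2:ℝ)+α) = T := by
        rw [hδ₂def]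
        rw [show ((2:ℝ)+α)⁻¹ = (2+α)⁻¹ by norm_num]
        exact Real.rpow_inv_rpow hT0.le (ne_of_gt h2α)
      linarith
    have h3 : C₂*‖x‖^((2:ℝ)+α) ≤ C₂*T :=
      mul_le_mul_of_nonneg_left hrT.le hC₂0
    have h4 : C₂*T < (C₂+1)*T := by nlinarith
    have h5 : (C₂+1)*T = η/2 := by
      have h40 : C₂+1 ≠ 0 := by positivity
      rw [hTdef]
      field_simp
    linarith
  calc |∑ i, x i * fderiv ℝ u x (EuclideanSpace.single i (1:ℝ))| ≤ (N:ℝ)*(‖x‖*K) := habs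
  _ = (N:ℝ)*ε' + C₂*‖x‖^((2:ℝ)+α) + 6*(N:ℝ)*((N:ℝ)-1)*ε' := hNK
  _ < η/4 + η/2 + η/4 := by
      have := hsmall1
      have h6 : (0:ℝ) ≤ (N:ℝ)*ε' := by positivity
      have hN3 : (3:ℝ) ≤ (N:ℝ) := by exact_mod_cast hN
      have h7 : (0:ℝ) ≤ 6*(N:ℝ)*((N:ℝ)-1)*ε' := by nlinarith
      linarith [hsmall2]
  _ = η := by ring
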